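/- arXiv:1705.04610 — 2 statements merged into one kernel-verified Lean document; each statement's English description precedes it below -/
import Mathlib

section
/- The number of m-dimensional free direct summands (m-subspaces) of (Z/p^s Z)^n equals p^{(s-1)m(n-m)} · [n choose m]_p, where [n choose m]_p is the Gaussian binomial coefficient at q = p. -/
/-- An `m`-subspace of `(ZMod (p^s))^n`: a submodule spanned by the rows of an
`m × n` matrix having a right inverse (equivalently, a free direct summand of rank `m`). -/
def IsSubspace (p s n m : ℕ) (V : Submodule (ZMod (p ^ s)) (Fin n → ZMod (p ^ s))) : Prop :=
  ∃ M : Matrix (Fin m) (Fin n) (ZMod (p ^ s)),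
    (∃ B : Matrix (Fin n) (Fin m) (ZMod (p ^ s)), M * B = 1) ∧
    V = Submodule.span (ZMod (p ^ s)) (Set.range fun i => M i)

/-- The Gaussian binomial coefficient `[n choose m]_q = ∏_{i=1}^m (q^{n+1-i}-1)/(q^i-1)`. -/
def gaussBinomial (q n m : ℕ) : ℕ :=
  (∏ i ∈ Finset.range m, (q ^ (n - i) - 1)) / (∏ i ∈ Finset.range m, (q ^ (i + 1) - 1))


open Matrix Set Submodule

section Generic

variable {R : Type*} [CommRing R] {m n : ℕ}

lemma span_rows_mul_le (A : Matrix (Fin m) (Fin m) R) (M : Matrix (Fin m) (Fin n) R) :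
    span R (range fun i => (A * M) i) ≤ span R (range fun i => M i) := by
  rw [span_le]
  rintro _ ⟨i, rfl⟩
  have h : (A * M) i ∈ LinearMap.range M.vecMulLinear :=
    ⟨A i, by ext j; simp [Matrix.vecMul, Matrix.mul_apply, dotProduct]⟩
  rwa [range_vecMulLinear] at h

lemma exists_left_factor {M M' : Matrix (Fin m) (Fin n) R}
    (h : span R (range fun i => M i) ≤ span R (range fun i => M' i)) :
    ∃ A : Matrix (Fin m) (Fin m) R, A * M' = M := by
  have hi : ∀ i, M i ∈ LinearMap.range M'.vecMulLinear := fun i => by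
    rw [range_vecMulLinear]; exact h (subset_span ⟨i, rfl⟩)
  choose c hc using hi
  refine ⟨Matrix.of c, ?_⟩
  ext i j
  have := congrFun (hc i) j
  simpa [Matrix.vecMul, Matrix.mul_apply, dotProduct] using this

lemma exists_units_factor {M M' : Matrix (Fin m) (Fin n) R}
    (hM : ∃ B : Matrix (Fin n) (Fin m) R, M * B = 1)
    (hspan : span R (range fun i => M i) = span R (range fun i => M' i)) :
    ∃ U : (Matrix (Fin m) (Fin m) R)ˣ, (U : Matrix (Fin m) (Fin m) R) * M' = M := by
  obtain ⟨B, hB⟩ := hM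
  obtain ⟨A, hA⟩ := exists_left_factor hspan.le
  obtain ⟨A', hA'⟩ := exists_left_factor hspan.ge
  have h1 : A * A' = 1 := by
    have h : (A * A') * (M * B) = M * B := by
      rw [← Matrix.mul_assoc, Matrix.mul_assoc A A' M, hA', hA]
    rwa [hB, mul_one] at h
  exact ⟨⟨A, A', h1, mul_eq_one_comm.mp h1⟩, hA⟩

lemma span_units_mul (U : (Matrix (Fin m) (Fin m) R)ˣ) (M : Matrix (Fin m) (Fin n) R) :
    span R (range fun i => ((U : Matrix (Fin m) (Fin m) R) * M) i)
      = span R (range fun i => M i) := by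
  refine le_antisymm (span_rows_mul_le _ _) ?_
  have h := span_rows_mul_le (↑U⁻¹) ((U : Matrix (Fin m) (Fin m) R) * M)
  rwa [← Matrix.mul_assoc, U.inv_mul, Matrix.one_mul] at h

lemma card_frames_eq_card_sub_mul_card_units (R : Type*) [CommRing R] (m n : ℕ) :
    Nat.card {M : Matrix (Fin m) (Fin n) R // ∃ B : Matrix (Fin n) (Fin m) R, M * B = 1}
      = Nat.card {V : Submodule R (Fin n → R) //
          ∃ M : Matrix (Fin m) (Fin n) R, (∃ B : Matrix (Fin n) (Fin m) R, M * B = 1) ∧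
            V = span R (range fun i => M i)}
        * Nat.card (Matrix (Fin m) (Fin m) R)ˣ := by
  set S := {V : Submodule R (Fin n → R) //
      ∃ M : Matrix (Fin m) (Fin n) R, (∃ B : Matrix (Fin n) (Fin m) R, M * B = 1) ∧
        V = span R (range fun i => M i)} with hS
  let c : S → Matrix (Fin m) (Fin n) R := fun V => V.2.choose
  have hc1 : ∀ V : S, ∃ B : Matrix (Fin n) (Fin m) R, c V * B = 1 := fun V => V.2.choose_spec.1
  have hc2 : ∀ V : S, V.1 = span R (range fun i => c V i) := fun V => V.2.choose_spec.2
  have hframe : ∀ (V : S) (U : (Matrix (Fin m) (Fin m) R)ˣ),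
      ∃ B : Matrix (Fin n) (Fin m) R, ((U : Matrix (Fin m) (Fin m) R) * c V) * B = 1 := by
    intro V U
    obtain ⟨B, hB⟩ := hc1 V
    refine ⟨B * (↑U⁻¹ : Matrix (Fin m) (Fin m) R), ?_⟩
    rw [Matrix.mul_assoc, ← Matrix.mul_assoc (c V), hB, Matrix.one_mul, U.mul_inv]
  let g : S × (Matrix (Fin m) (Fin m) R)ˣ
      → {M : Matrix (Fin m) (Fin n) R // ∃ B : Matrix (Fin n) (Fin m) R, M * B = 1} :=
    fun x => ⟨(x.2 : Matrix (Fin m) (Fin m) R) * c x.1, hframe x.1 x.2⟩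
  have hg : Function.Bijective g := by
    constructor
    · rintro ⟨V₁, U₁⟩ ⟨V₂, U₂⟩ h
      have hval : (U₁ : Matrix (Fin m) (Fin m) R) * c V₁
          = (U₂ : Matrix (Fin m) (Fin m) R) * c V₂ := congrArg Subtype.val h
      have hV : V₁ = V₂ := by
        apply Subtype.ext
        rw [hc2 V₁, hc2 V₂, ← span_units_mul U₁ (c V₁), ← span_units_mul U₂ (c V₂), hval]
      subst hV
      obtain ⟨B, hB⟩ := hc1 V₁
      have h2 : (U₁ : Matrix (Fin m) (Fin m) R) * (c V₁ * B)
          = (U₂ : Matrix (Fin m) (Fin m) R) * (c V₁ * B) := by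
        rw [← Matrix.mul_assoc, ← Matrix.mul_assoc, hval]
      rw [hB, Matrix.mul_one, Matrix.mul_one] at h2
      exact Prod.ext rfl (Units.ext h2)
    · rintro ⟨M, hM⟩
      set V : S := ⟨span R (range fun i => M i), ⟨M, hM, rfl⟩⟩ with hV
      have hspan : span R (range fun i => M i) = span R (range fun i => c V i) := hc2 V
      obtain ⟨U, hU⟩ := exists_units_factor hM hspan
      exact ⟨⟨V, U⟩, Subtype.ext hU⟩
  rw [Nat.card_congr (Equiv.ofBijective g hg).symm, Nat.card_prod]

end Generic


section ZModPart

-- the reduction hom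
noncomputable def redHom {p s : ℕ} (hs : 1 ≤ s) : ZMod (p ^ s) →+* ZMod p :=
  ZMod.castHom (dvd_pow_self p (by omega)) (ZMod p)

lemma redHom_surjective_section {p s : ℕ} (hp : p.Prime) (hs : 1 ≤ s) (x : ZMod p) :
    redHom (p := p) hs ((x.val : ℕ) : ZMod (p ^ s)) = x := by
  haveI : NeZero p := ⟨hp.ne_zero⟩
  rw [map_natCast]
  exact ZMod.natCast_rightInverse x

lemma eq_p_mul_of_red_eq_zero {p s : ℕ} (hp : p.Prime) (hs : 1 ≤ s) {x : ZMod (p ^ s)}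
    (hx : redHom (p := p) hs x = 0) : ∃ y : ZMod (p ^ s), x = (p : ZMod (p ^ s)) * y := by
  haveI : NeZero (p ^ s) := ⟨pow_ne_zero _ hp.ne_zero⟩
  have hxv : ((x.val : ℕ) : ZMod (p ^ s)) = x := ZMod.natCast_rightInverse x
  have h2 : ((x.val : ℕ) : ZMod p) = 0 := by
    have h3 : redHom (p := p) hs ((x.val : ℕ) : ZMod (p ^ s)) = 0 := by rw [hxv]; exact hx
    rwa [map_natCast] at h3
  rw [ZMod.natCast_eq_zero_iff] at h2
  obtain ⟨k, hk⟩ := h2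
  exact ⟨(k : ZMod (p ^ s)), by rw [← hxv, hk]; push_cast; ring⟩

lemma frame_iff_map {p s a b : ℕ} (hp : p.Prime) (hs : 1 ≤ s) (M : Matrix (Fin a) (Fin b) (ZMod (p ^ s))) :
    (∃ B : Matrix (Fin b) (Fin a) (ZMod (p ^ s)), M * B = 1)
      ↔ (∃ B' : Matrix (Fin b) (Fin a) (ZMod p), M.map (redHom (p := p) hs) * B' = 1) := by
  set φ := redHom (p := p) hs
  constructor
  · rintro ⟨B, hB⟩
    refine ⟨B.map φ, ?_⟩
    rw [← Matrix.map_mul, hB, Matrix.map_one _ (map_zero φ) (map_one φ)]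
  · rintro ⟨B', hB'⟩
    -- lift B'
    set B₀ : Matrix (Fin b) (Fin a) (ZMod (p ^ s)) :=
      Matrix.of fun i j => (((B' i j).val : ℕ) : ZMod (p ^ s)) with hB₀
    have hmapB₀ : B₀.map φ = B' := by
      ext i j
      exact redHom_surjective_section hp hs (B' i j)
    set N : Matrix (Fin a) (Fin a) (ZMod (p ^ s)) := M * B₀ - 1 with hN
    have hmapN : ∀ i j, φ (N i j) = 0 := by
      intro i j
      have : (M * B₀ - 1).map φ = 0 := by
        rw [Matrix.map_sub _ (map_sub φ), Matrix.map_mul, hmapB₀, hB',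
          Matrix.map_one _ (map_zero φ) (map_one φ), sub_self]
      exact congrFun (congrFun this i) j
    have hPN : ∃ N₁ : Matrix (Fin a) (Fin a) (ZMod (p ^ s)),
        N = (p : ZMod (p ^ s)) • N₁ := by
      choose y hy using fun i j => eq_p_mul_of_red_eq_zero hp hs (hmapN i j)
      exact ⟨Matrix.of y, by ext i j; simpa [Matrix.smul_apply, smul_eq_mul] using hy i j⟩
    obtain ⟨N₁, hN₁⟩ := hPN
    have hnil : IsNilpotent N := by
      refine ⟨s, ?_⟩
      rw [hN₁, smul_pow]
      have hps : (p : ZMod (p ^ s)) ^ s = 0 := by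
        have : (((p ^ s : ℕ)) : ZMod (p ^ s)) = 0 := ZMod.natCast_self _
        rwa [Nat.cast_pow] at this
      rw [hps, zero_smul]
    have hunit : IsUnit (M * B₀) := by
      have h4 : M * B₀ = 1 + N := by rw [hN, add_comm, sub_add_cancel]
      rw [h4]
      exact hnil.isUnit_one_add
    obtain ⟨u, hu⟩ := hunit
    refine ⟨B₀ * (↑u⁻¹ : Matrix (Fin a) (Fin a) (ZMod (p ^ s))), ?_⟩
    rw [← Matrix.mul_assoc, ← hu, u.mul_inv]

end ZModPart


section Fiber

variable {p s : ℕ}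

/-- section of the reduction -/
noncomputable def sec (p s : ℕ) (x : ZMod p) : ZMod (p ^ s) := ((x.val : ℕ) : ZMod (p ^ s))

lemma red_sec (hp : p.Prime) (hs : 1 ≤ s) (x : ZMod p) :
    redHom (p := p) hs (sec p s x) = x := by
  haveI : NeZero p := ⟨hp.ne_zero⟩
  rw [sec, map_natCast]
  exact ZMod.natCast_rightInverse x

/-- split any type with a retraction into base × fiber -/
noncomputable def splitEquiv (hp : p.Prime) (hs : 1 ≤ s) :
    ZMod (p ^ s) ≃ ZMod p × {x : ZMod (p ^ s) // redHom (p := p) hs x = 0} where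
  toFun x := (redHom hs x, ⟨x - sec p s (redHom hs x), by
    rw [map_sub, red_sec hp hs, sub_self]⟩)
  invFun y := sec p s y.1 + y.2.1
  left_inv x := by simp
  right_inv y := by
    have h1 : redHom (p := p) hs (sec p s y.1 + y.2.1) = y.1 := by
      rw [map_add, red_sec hp hs, y.2.2, add_zero]
    refine Prod.ext h1 (Subtype.ext ?_)
    simp only [h1]
    ring

lemma card_ker (hp : p.Prime) (hs : 1 ≤ s) :
    Nat.card {x : ZMod (p ^ s) // redHom (p := p) hs x = 0} = p ^ (s - 1) := by
  haveI : NeZero (p ^ s) := ⟨pow_ne_zero _ hp.ne_zero⟩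
  haveI : NeZero p := ⟨hp.ne_zero⟩
  have h1 := Nat.card_congr (splitEquiv hp hs)
  rw [Nat.card_prod, Nat.card_eq_fintype_card, Nat.card_eq_fintype_card, ZMod.card, ZMod.card] at h1
  have h2 : p ^ s = p * p ^ (s - 1) := by
    rw [← pow_succ']
    congr 1
    omega
  exact Nat.eq_of_mul_eq_mul_left hp.pos (h1.symm.trans h2)

/-- matrices over `ZMod (p^s)` whose reduction satisfies `P` -/
noncomputable def matrixSplitEquiv (hp : p.Prime) (hs : 1 ≤ s) {a b : ℕ}
    (P : Matrix (Fin a) (Fin b) (ZMod p) → Prop) :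
    {M : Matrix (Fin a) (Fin b) (ZMod (p ^ s)) // P (M.map (redHom (p := p) hs))}
      ≃ {N : Matrix (Fin a) (Fin b) (ZMod p) // P N}
        × (Fin a → Fin b → {x : ZMod (p ^ s) // redHom (p := p) hs x = 0}) where
  toFun M := (⟨M.1.map (redHom hs), M.2⟩,
    fun i j => ⟨M.1 i j - sec p s (redHom hs (M.1 i j)), by
      rw [map_sub, red_sec hp hs, sub_self]⟩)
  invFun x := ⟨Matrix.of fun i j => sec p s (x.1.1 i j) + (x.2 i j).1, by
    have h : (Matrix.of fun i j => sec p s (x.1.1 i j) + (x.2 i j).1).map (redHom (p := p) hs)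
        = x.1.1 := by
      ext i j
      simp only [Matrix.map_apply, Matrix.of_apply, map_add, red_sec hp hs, (x.2 i j).2, add_zero]
    rw [h]
    exact x.1.2⟩
  left_inv M := by
    refine Subtype.ext ?_
    ext i j
    simp [Matrix.map_apply]
  right_inv x := by
    have h : ∀ i j, redHom (p := p) hs (sec p s (x.1.1 i j) + (x.2 i j).1) = x.1.1 i j := by
      intro i j
      rw [map_add, red_sec hp hs, (x.2 i j).2, add_zero]
    refine Prod.ext (Subtype.ext ?_) ?_
    · ext i j
      simp [Matrix.map_apply, h i j]
    · funext i j
      refine Subtype.ext ?_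
      simp only [Matrix.map_apply, Matrix.of_apply, h i j]
      ring

lemma card_matrix_red (hp : p.Prime) (hs : 1 ≤ s) {a b : ℕ}
    (P : Matrix (Fin a) (Fin b) (ZMod p) → Prop) :
    Nat.card {M : Matrix (Fin a) (Fin b) (ZMod (p ^ s)) // P (M.map (redHom (p := p) hs))}
      = Nat.card {N : Matrix (Fin a) (Fin b) (ZMod p) // P N} * p ^ ((s - 1) * (a * b)) := by
  rw [Nat.card_congr (matrixSplitEquiv hp hs P), Nat.card_prod]
  congr 1
  rw [Nat.card_pi]
  have h : ∀ i : Fin a, Nat.card (Fin b → {x : ZMod (p ^ s) // redHom (p := p) hs x = 0})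
      = p ^ ((s - 1) * b) := by
    intro i
    rw [Nat.card_pi, Finset.prod_const, card_ker hp hs, Finset.card_univ, Fintype.card_fin,
      ← pow_mul]
  rw [Finset.prod_congr rfl (fun i _ => h i), Finset.prod_const, Finset.card_univ,
    Fintype.card_fin, ← pow_mul]
  congr 1
  ring

end Fiber

section FieldCount

variable {F : Type*} [Field F] {a b : ℕ}

lemma frame_iff_linearIndependent (M : Matrix (Fin a) (Fin b) F) :
    (∃ B : Matrix (Fin b) (Fin a) F, M * B = 1) ↔ LinearIndependent F (fun i => M i) := by
  constructor
  · rintro ⟨B, hB⟩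
    rw [show (fun i => M i) = M.row from rfl, ← Matrix.vecMul_injective_iff]
    intro x y hxy
    have h := congrArg (fun v => v ᵥ* B) hxy
    simpa [Matrix.vecMul_vecMul, hB, Matrix.vecMul_one] using h
  · intro h
    have hinj : Function.Injective M.vecMulLinear := by
      have := Matrix.vecMul_injective_iff (M := M).mpr h
      intro x y hxy
      exact this (by simpa [Matrix.vecMulLinear_apply] using hxy)
    obtain ⟨g, hg⟩ := M.vecMulLinear.exists_leftInverse_of_injective
      (LinearMap.ker_eq_bot.mpr hinj)
    set B : Matrix (Fin b) (Fin a) F := Matrix.of fun j i => g (Pi.single j 1) i with hBdef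
    have hvB : ∀ x : Fin b → F, x ᵥ* B = g x := by
      intro x
      have hx : x = ∑ j, x j • (Pi.single j 1 : Fin b → F) := by
        ext j'
        rw [Finset.sum_apply]
        simp [Pi.single_apply, mul_comm]
      funext i
      calc (x ᵥ* B) i = ∑ j, x j * g (Pi.single j 1) i := by
            simp [Matrix.vecMul, dotProduct, hBdef]
        _ = g x i := by
            conv_rhs => rw [hx, map_sum]
            rw [Finset.sum_apply]
            simp [smul_eq_mul]
    refine ⟨B, ?_⟩
    ext i j
    have h1 : (M * B) i = Pi.single i 1 ᵥ* (M * B) := (Matrix.single_one_vecMul i (M * B)).symm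
    have h2 : Pi.single i 1 ᵥ* (M * B) = (Pi.single i 1 ᵥ* M) ᵥ* B :=
      (Matrix.vecMul_vecMul _ M B).symm
    have h3 : (Pi.single i 1 ᵥ* M) ᵥ* B = g (M.vecMulLinear (Pi.single i 1)) := hvB _
    have h4 : g (M.vecMulLinear (Pi.single i 1)) = Pi.single i 1 :=
      LinearMap.congr_fun hg (Pi.single i (1 : F))
    have h5 : (M * B) i = Pi.single i 1 := by rw [h1, h2, h3, h4]
    have h6 := congrFun h5 j
    rw [Pi.single_apply] at h6
    rw [h6, Matrix.one_apply]
    by_cases hij : i = j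
    · simp [hij]
    · simp only [if_neg hij, if_neg (fun hji : j = i => hij hji.symm)]

lemma card_frames_field {p : ℕ} (hp : p.Prime) {a b : ℕ} (hab : a ≤ b) :
    Nat.card {M : Matrix (Fin a) (Fin b) (ZMod p) // ∃ B : Matrix (Fin b) (Fin a) (ZMod p),
        M * B = 1}
      = ∏ i ∈ Finset.range a, (p ^ b - p ^ i) := by
  haveI : Fact p.Prime := ⟨hp⟩
  have e : {M : Matrix (Fin a) (Fin b) (ZMod p) // ∃ B : Matrix (Fin b) (Fin a) (ZMod p),
      M * B = 1} ≃ {s : Fin a → (Fin b → ZMod p) // LinearIndependent (ZMod p) s} :=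
    Equiv.subtypeEquiv (Equiv.refl _) fun M => by
      exact frame_iff_linearIndependent (M : Matrix (Fin a) (Fin b) (ZMod p))
  rw [Nat.card_congr e, card_linearIndependent (by
    rw [Module.finrank_fin_fun]; exact hab)]
  rw [ZMod.card, Module.finrank_fin_fun]
  exact Fin.prod_univ_eq_prod_range (fun i => p ^ b - p ^ i) a

end FieldCount

section Assemble

lemma card_units_eq_card_square_frames (R : Type*) [CommRing R] (m : ℕ) :
    Nat.card (Matrix (Fin m) (Fin m) R)ˣ
      = Nat.card {M : Matrix (Fin m) (Fin m) R // ∃ B : Matrix (Fin m) (Fin m) R, M * B = 1} := by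
  refine Nat.card_congr (Equiv.ofBijective (fun U => ⟨(U : Matrix (Fin m) (Fin m) R),
    (↑U⁻¹ : Matrix (Fin m) (Fin m) R), U.mul_inv⟩) ⟨?_, ?_⟩)
  · intro U₁ U₂ h
    exact Units.ext (congrArg Subtype.val h)
  · rintro ⟨M, B, hB⟩
    exact ⟨⟨M, B, hB, mul_eq_one_comm.mp hB⟩, rfl⟩

lemma card_frames_zmod {p s : ℕ} (hp : p.Prime) (hs : 1 ≤ s) {a b : ℕ} (hab : a ≤ b) :
    Nat.card {M : Matrix (Fin a) (Fin b) (ZMod (p ^ s)) //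
        ∃ B : Matrix (Fin b) (Fin a) (ZMod (p ^ s)), M * B = 1}
      = (∏ i ∈ Finset.range a, (p ^ b - p ^ i)) * p ^ ((s - 1) * (a * b)) := by
  have e1 := Nat.card_congr (Equiv.subtypeEquivRight (frame_iff_map (a := a) (b := b) hp hs))
  rw [e1, card_matrix_red hp hs
    (fun N => ∃ B' : Matrix (Fin b) (Fin a) (ZMod p), N * B' = 1),
    card_frames_field hp hab]

lemma prod_sub_pow_factor {p : ℕ} (hp : 2 ≤ p) {m k : ℕ} (hmk : m ≤ k) :
    ∏ i ∈ Finset.range m, (p ^ k - p ^ i)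
      = (∏ i ∈ Finset.range m, p ^ i) * ∏ i ∈ Finset.range m, (p ^ (k - i) - 1) := by
  rw [← Finset.prod_mul_distrib]
  refine Finset.prod_congr rfl fun i hi => ?_
  have hik : i ≤ k := le_trans (le_of_lt (Finset.mem_range.mp hi)) hmk
  rw [Nat.mul_sub, mul_one, ← pow_add, Nat.add_sub_cancel' hik]

end Assemble


lemma arith_assemble (p e m n cardS P₀ A B : ℕ) (hp : p.Prime) (hmn : m < n)
    (hApos : 0 < A) (hP₀pos : 0 < P₀) (hcop : Nat.Coprime A (p ^ (e * (m * (n - m)))))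
    (H : P₀ * B * p ^ (e * (m * n)) = cardS * (P₀ * A * p ^ (e * (m * m)))) :
    cardS = p ^ (e * m * (n - m)) * (B / A) := by
  have hmn' : m ≤ n := hmn.le
  set E := e * (m * (n - m)) with hE
  have hsplit : e * (m * n) = e * (m * m) + E := by
    have h1 : m * m + m * (n - m) = m * n := by
      rw [← Nat.mul_add, Nat.add_sub_cancel' hmn']
    rw [hE, ← Nat.mul_add, h1]
  have hDpos : 0 < P₀ * p ^ (e * (m * m)) :=
    Nat.mul_pos hP₀pos (pow_pos hp.pos _)
  have key : B * p ^ E = cardS * A := by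
    refine Nat.eq_of_mul_eq_mul_left hDpos ?_
    calc (P₀ * p ^ (e * (m * m))) * (B * p ^ E)
        = (P₀ * B) * p ^ (e * (m * m) + E) := by rw [pow_add]; ring
      _ = (P₀ * B) * p ^ (e * (m * n)) := by rw [hsplit]
      _ = cardS * (P₀ * A * p ^ (e * (m * m))) := H
      _ = (P₀ * p ^ (e * (m * m))) * (cardS * A) := by ring
  have hdvd : A ∣ B := by
    refine Nat.Coprime.dvd_of_dvd_mul_left hcop ?_
    rw [mul_comm (p ^ E) B, key]
    exact dvd_mul_left A cardS
  have hBA : B = (B / A) * A := (Nat.div_mul_cancel hdvd).symm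
  have final : (p ^ E * (B / A)) * A = cardS * A := by
    conv_rhs => rw [← key, hBA]
    ring
  have h2 := (Nat.eq_of_mul_eq_mul_right hApos final).symm
  rw [h2, hE]
  ring

lemma coprime_prod_pow (p : ℕ) (hp : p.Prime) (m k : ℕ) :
    Nat.Coprime (∏ i ∈ Finset.range m, (p ^ (i + 1) - 1)) (p ^ k) := by
  refine Nat.Coprime.pow_right _ (Nat.Coprime.prod_left fun i _ => ?_)
  have hnd : ¬ p ∣ p ^ (i + 1) - 1 := by
    intro hdvd
    have h1 : p ∣ p ^ (i + 1) := dvd_pow_self p (Nat.succ_ne_zero i)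
    have h2 : p ∣ p ^ (i + 1) - (p ^ (i + 1) - 1) := Nat.dvd_sub h1 hdvd
    have h3 : 1 ≤ p ^ (i + 1) := Nat.one_le_pow _ _ hp.pos
    rw [Nat.sub_sub_self h3] at h2
    exact hp.one_lt.ne' (Nat.dvd_one.mp h2)
  exact (Nat.Prime.coprime_iff_not_dvd hp |>.mpr hnd).symm

theorem stmt_13' (p s m n : ℕ) (hp : p.Prime) (hs : 1 ≤ s) (hm : 1 ≤ m) (hmn : m < n) :
    Nat.card {V : Submodule (ZMod (p ^ s)) (Fin n → ZMod (p ^ s)) //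
        ∃ M : Matrix (Fin m) (Fin n) (ZMod (p ^ s)),
          (∃ B : Matrix (Fin n) (Fin m) (ZMod (p ^ s)), M * B = 1) ∧
          V = Submodule.span (ZMod (p ^ s)) (Set.range fun i => M i)}
      = p ^ ((s - 1) * m * (n - m)) *
        ((∏ i ∈ Finset.range m, (p ^ (n - i) - 1)) / (∏ i ∈ Finset.range m, (p ^ (i + 1) - 1))) := by
  have hmn' : m ≤ n := hmn.le
  have hp2 : 2 ≤ p := hp.two_le
  have hGn : ∏ i ∈ Finset.range m, (p ^ n - p ^ i)
      = (∏ i ∈ Finset.range m, p ^ i) * ∏ i ∈ Finset.range m, (p ^ (n - i) - 1) :=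
    prod_sub_pow_factor hp2 hmn'
  have hGm : ∏ i ∈ Finset.range m, (p ^ m - p ^ i)
      = (∏ i ∈ Finset.range m, p ^ i) * ∏ i ∈ Finset.range m, (p ^ (i + 1) - 1) := by
    rw [prod_sub_pow_factor hp2 (le_refl m)]
    congr 1
    rw [← Finset.prod_range_reflect (fun i => p ^ (i + 1) - 1) m]
    refine Finset.prod_congr rfl fun i hi => ?_
    have him : i < m := Finset.mem_range.mp hi
    congr 2
    omega
  have hApos : 0 < ∏ i ∈ Finset.range m, (p ^ (i + 1) - 1) := Finset.prod_pos fun i _ => by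
    have h2 : 2 ≤ p ^ (i + 1) := le_trans hp2 (Nat.le_self_pow (Nat.succ_ne_zero i) p)
    omega
  have hP₀pos : 0 < ∏ i ∈ Finset.range m, p ^ i :=
    Finset.prod_pos fun i _ => pow_pos hp.pos _
  have H := card_frames_eq_card_sub_mul_card_units (ZMod (p ^ s)) m n
  rw [card_frames_zmod hp hs hmn', card_units_eq_card_square_frames,
    card_frames_zmod hp hs (le_refl m)] at H
  rw [hGn, hGm] at H
  refine arith_assemble p (s - 1) m n _ _ _ _ hp hmn hApos hP₀pos
    (coprime_prod_pow p hp m _) ?_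
  calc (∏ i ∈ Finset.range m, p ^ i) * (∏ i ∈ Finset.range m, (p ^ (n - i) - 1))
        * p ^ ((s - 1) * (m * n))
      = ((∏ i ∈ Finset.range m, p ^ i) * ∏ i ∈ Finset.range m, (p ^ (n - i) - 1))
        * p ^ ((s - 1) * (m * n)) := by ring
    _ = _ := H
    _ = _ := by ring

theorem stmt_13 (p s m n : ℕ) (hp : p.Prime) (hs : 1 ≤ s) (hm : 1 ≤ m) (hmn : m < n) :
    Nat.card {V : Submodule (ZMod (p ^ s)) (Fin n → ZMod (p ^ s)) // IsSubspace p s n m V} =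
      p ^ ((s - 1) * m * (n - m)) * gaussBinomial p n m := by
  unfold IsSubspace gaussBinomial
  exact stmt_13' p s m n hp hs hm hmn
end

section
/- Let P be an (m-1)-subspace and Q an (m+1)-subspace of (Z/p^s Z)^n with P ⊂ Q. Then the number of m-subspaces X with P ⊂ X ⊂ Q equals p^{s-1}(p+1). -/
open Submodule LinearMap Module

section SplitMap

variable {R : Type*} [CommRing R] {F F' G M N : Type*}
  [AddCommGroup F] [Module R F] [AddCommGroup F'] [Module R F']
  [AddCommGroup G] [Module R G]
  [AddCommGroup M] [Module R M] [AddCommGroup N] [Module R N]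

/-- `X` is the image of a split injection from `F`. -/
def SplitMap (R : Type*) [CommRing R] (F : Type*) {M : Type*} [AddCommGroup F] [Module R F]
    [AddCommGroup M] [Module R M] (X : Submodule R M) : Prop :=
  ∃ f : F →ₗ[R] M, (∃ g : M →ₗ[R] F, g.comp f = LinearMap.id) ∧ LinearMap.range f = X

lemma SplitMap.congr (e : F ≃ₗ[R] F') {X : Submodule R M} :
    SplitMap R F X → SplitMap R F' X := by
  rintro ⟨f, ⟨g, hgf⟩, rfl⟩
  refine ⟨f.comp e.symm.toLinearMap, ⟨e.toLinearMap.comp g, ?_⟩, ?_⟩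
  · ext x
    have h1 := LinearMap.congr_fun hgf (e.symm x)
    simp only [LinearMap.comp_apply, LinearMap.id_apply, LinearEquiv.coe_coe] at h1 ⊢
    rw [h1, LinearEquiv.apply_symm_apply]
  · rw [LinearMap.range_comp, LinearEquiv.range, Submodule.map_top]

lemma splitMap_map_iff (j : M →ₗ[R] N) (r : N →ₗ[R] M) (hrj : r.comp j = LinearMap.id)
    (Y : Submodule R M) : SplitMap R F (Y.map j) ↔ SplitMap R F Y := by
  have hrj' : ∀ y : M, r (j y) = y := fun y => by
    have h := LinearMap.congr_fun hrj y
    simpa using h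
  have hjr : ∀ v ∈ LinearMap.range j, j (r v) = v := by
    rintro _ ⟨y, rfl⟩
    rw [hrj' y]
  constructor
  · rintro ⟨f, ⟨g, hgf⟩, hr⟩
    refine ⟨r.comp f, ⟨g.comp j, ?_⟩, ?_⟩
    · ext x
      have hx : f x ∈ LinearMap.range j := by
        have hmem : f x ∈ Y.map j := hr ▸ LinearMap.mem_range_self f x
        obtain ⟨y, _, hy⟩ := hmem
        exact ⟨y, hy⟩
      have h2 := LinearMap.congr_fun hgf x
      simp only [comp_apply, id_apply] at h2 ⊢
      rw [hjr _ hx, h2]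
    · rw [LinearMap.range_comp, hr, ← Submodule.map_comp, hrj, Submodule.map_id]
  · rintro ⟨f, ⟨g, hgf⟩, hr⟩
    refine ⟨j.comp f, ⟨g.comp r, ?_⟩, ?_⟩
    · ext x
      have h2 := LinearMap.congr_fun hgf x
      simp only [comp_apply, id_apply] at h2 ⊢
      rw [hrj', h2]
    · rw [LinearMap.range_comp, hr]

lemma map_lt_map_iff_of_injective {j : M →ₗ[R] N} (hj : Function.Injective j)
    (A B : Submodule R M) : A.map j < B.map j ↔ A < B := by
  have hle : ∀ A B : Submodule R M, A.map j ≤ B.map j ↔ A ≤ B := by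
    intro A B
    constructor
    · intro h x hx
      have : j x ∈ B.map j := h (Submodule.mem_map_of_mem hx)
      obtain ⟨y, hy, he⟩ := this
      exact hj he ▸ hy
    · exact fun h => Submodule.map_mono h
  simp [lt_iff_le_not_ge, hle]

/-- A splitting of the quotient by a direct summand. -/
lemma mkQ_section (h : F →ₗ[R] M) (rh : M →ₗ[R] F) (hrh : rh.comp h = LinearMap.id)
    {P : Submodule R M} (hhr : LinearMap.range h = P) :
    ∃ σ : (M ⧸ P) →ₗ[R] M,
      (∀ x : M, σ (P.mkQ x) = x - h (rh x)) ∧ (∀ q : M ⧸ P, P.mkQ (σ q) = q) := by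
  have hker : ∀ x : M, x ∈ P → P.mkQ x = 0 := by
    intro x hx
    rw [← P.ker_mkQ] at hx
    exact LinearMap.mem_ker.mp hx
  have hle : P ≤ LinearMap.ker (LinearMap.id - h.comp rh) := by
    rw [← hhr]
    rintro _ ⟨x, rfl⟩
    have hx := LinearMap.congr_fun hrh x
    simp only [comp_apply, id_apply] at hx
    simp [LinearMap.mem_ker, hx]
  refine ⟨P.liftQ (LinearMap.id - h.comp rh) hle, fun x => ?_, fun q => ?_⟩
  · have := LinearMap.congr_fun (P.liftQ_mkQ (LinearMap.id - h.comp rh) hle) x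
    simpa using this
  · obtain ⟨x, rfl⟩ := P.mkQ_surjective q
    have h1 : P.liftQ (LinearMap.id - h.comp rh) hle (P.mkQ x) = x - h (rh x) := by
      have := LinearMap.congr_fun (P.liftQ_mkQ (LinearMap.id - h.comp rh) hle) x
      simpa using this
    rw [h1, map_sub, hker (h (rh x)) (hhr ▸ LinearMap.mem_range_self h (rh x)), sub_zero]

lemma splitMap_comap_mkQ (h : F →ₗ[R] M) (rh : M →ₗ[R] F) (hrh : rh.comp h = LinearMap.id)
    {P : Submodule R M} (hhr : LinearMap.range h = P)
    {Y : Submodule R (M ⧸ P)} (hY : SplitMap R G Y) :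
    SplitMap R (F × G) (Y.comap P.mkQ) := by
  obtain ⟨f1, ⟨g1, hg1⟩, hr1⟩ := hY
  obtain ⟨σ, hσπ, hπσ⟩ := mkQ_section h rh hrh hhr
  have hker : ∀ x : M, x ∈ P → P.mkQ x = 0 := by
    intro x hx
    rw [← P.ker_mkQ] at hx
    exact LinearMap.mem_ker.mp hx
  refine ⟨h.comp (LinearMap.fst R F G) + (σ.comp f1).comp (LinearMap.snd R F G),
    ⟨LinearMap.prod (rh.comp (LinearMap.id - σ.comp P.mkQ)) (g1.comp P.mkQ), ?_⟩, ?_⟩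
  · apply LinearMap.ext
    rintro ⟨x, y⟩
    have hπΦ : P.mkQ (h x + σ (f1 y)) = f1 y := by
      rw [map_add, hker (h x) (hhr ▸ LinearMap.mem_range_self h x), hπσ, zero_add]
    have hg1y := LinearMap.congr_fun hg1 y
    simp only [comp_apply, id_apply] at hg1y
    have hrhx := LinearMap.congr_fun hrh x
    simp only [comp_apply, id_apply] at hrhx
    simp only [LinearMap.add_apply, comp_apply, fst_apply, snd_apply, LinearMap.prod_apply,
      Function.prod, LinearMap.sub_apply, id_apply]
    rw [hπΦ, add_sub_cancel_right, hrhx, hg1y]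
  · apply le_antisymm
    · rintro _ ⟨⟨x, y⟩, rfl⟩
      simp only [LinearMap.add_apply, comp_apply, fst_apply, snd_apply]
      rw [Submodule.mem_comap, map_add, hker (h x) (hhr ▸ LinearMap.mem_range_self h x),
        hπσ, zero_add]
      exact hr1 ▸ LinearMap.mem_range_self f1 y
    · intro v hv
      rw [Submodule.mem_comap, ← hr1] at hv
      obtain ⟨y, hy⟩ := hv
      have hker0 : ∀ x : M, P.mkQ x = 0 → x ∈ P := by
        intro x hx
        rw [← LinearMap.mem_ker] at hx
        rwa [P.ker_mkQ] at hx
      have h00 : P.mkQ (v - σ (f1 y)) = 0 := by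
        rw [map_sub, hπσ, hy, sub_self]
      have hw : v - σ (f1 y) ∈ LinearMap.range h := by
        rw [hhr]
        exact hker0 _ h00
      obtain ⟨x, hx⟩ := hw
      refine ⟨(x, y), ?_⟩
      simp only [LinearMap.add_apply, comp_apply, fst_apply, snd_apply]
      rw [hx]
      abel

lemma splitMap_rank_eq [Nontrivial R] {a b : ℕ} {X : Submodule R M}
    (ha : SplitMap R (Fin a → R) X) (hb : SplitMap R (Fin b → R) X) : a = b := by
  obtain ⟨f, ⟨g, hgf⟩, hrf⟩ := ha
  obtain ⟨f', ⟨g', hgf'⟩, hrf'⟩ := hb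
  have hinj : Function.Injective f := by
    have hli : Function.LeftInverse g f := fun x => by
      have := LinearMap.congr_fun hgf x; simpa using this
    exact hli.injective
  have hinj' : Function.Injective f' := by
    have hli : Function.LeftInverse g' f' := fun x => by
      have := LinearMap.congr_fun hgf' x; simpa using this
    exact hli.injective
  have e1 : (Fin a → R) ≃ₗ[R] X :=
    (LinearEquiv.ofInjective f hinj).trans (LinearEquiv.ofEq _ _ hrf)
  have e2 : (Fin b → R) ≃ₗ[R] X :=
    (LinearEquiv.ofInjective f' hinj').trans (LinearEquiv.ofEq _ _ hrf')
  have hfr := (e1.trans e2.symm).finrank_eq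
  simpa [Module.finrank_pi] using hfr

end SplitMap

noncomputable def finProdLequiv (R : Type*) [CommRing R] (a b : ℕ) :
    ((Fin a → R) × (Fin b → R)) ≃ₗ[R] (Fin (a + b) → R) :=
  (LinearEquiv.sumArrowLequivProdArrow (Fin a) (Fin b) R R).symm.trans
    (LinearEquiv.funCongrLeft R R finSumFinEquiv.symm)

noncomputable def finFunCongr (R : Type*) [CommRing R] {a b : ℕ} (h : a = b) :
    (Fin a → R) ≃ₗ[R] (Fin b → R) :=
  LinearEquiv.funCongrLeft R R (finCongr h.symm)

section ZModFacts

lemma zmod_isUnit_iff {p s : ℕ} (hp : p.Prime) (hs : 1 ≤ s) (a : ZMod (p ^ s)) :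
    IsUnit a ↔ ¬ p ∣ a.val := by
  haveI : NeZero (p ^ s) := ⟨pow_ne_zero _ hp.pos.ne'⟩
  have ha : ((a.val : ℕ) : ZMod (p ^ s)) = a := ZMod.natCast_rightInverse a
  conv_lhs => rw [← ha]
  rw [ZMod.isUnit_iff_coprime]
  rw [Nat.coprime_pow_right_iff (by omega : 0 < s), Nat.coprime_comm]
  exact hp.coprime_iff_not_dvd

lemma zmod_isLocalRing {p s : ℕ} (hp : p.Prime) (hs : 1 ≤ s) : IsLocalRing (ZMod (p ^ s)) := by
  haveI : Fact (1 < p ^ s) := ⟨Nat.one_lt_pow (by omega) hp.one_lt⟩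
  haveI : NeZero (p ^ s) := ⟨pow_ne_zero _ hp.pos.ne'⟩
  apply IsLocalRing.of_isUnit_or_isUnit_one_sub_self
  intro a
  by_cases hpa : p ∣ a.val
  · right
    rw [zmod_isUnit_iff hp hs]
    intro hpb
    have hsum : ((a.val + (1 - a).val : ℕ) : ZMod (p ^ s)) = ((1 : ℕ) : ZMod (p ^ s)) := by
      push_cast
      rw [ZMod.natCast_rightInverse a, ZMod.natCast_rightInverse (1 - a)]
      ring
    have hmod : (a.val + (1 - a).val) ≡ 1 [MOD p ^ s] :=
      (ZMod.natCast_eq_natCast_iff _ _ _).mp hsum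
    have hmodp : (a.val + (1 - a).val) ≡ 1 [MOD p] :=
      Nat.ModEq.of_dvd (dvd_pow_self p (by omega : s ≠ 0)) hmod
    have h0 : (a.val + (1 - a).val) ≡ 0 [MOD p] :=
      (Nat.modEq_zero_iff_dvd).mpr (Nat.dvd_add hpa hpb)
    have h1 : (1 : ℕ) ≡ 0 [MOD p] := hmodp.symm.trans h0
    have h2 : p ∣ 1 := (Nat.modEq_zero_iff_dvd).mp h1
    have := Nat.le_of_dvd one_pos h2
    have := hp.one_lt
    omega
  · left
    rw [zmod_isUnit_iff hp hs]
    exact hpa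

end ZModFacts

section Lines

variable {R : Type*} [CommRing R]

lemma line_splitMap (v : Fin 2 → R) (i : Fin 2) (hv : v i = 1) :
    SplitMap R (Fin 1 → R) (Submodule.span R {v}) := by
  refine ⟨(LinearMap.proj (0 : Fin 1)).smulRight v,
    ⟨(LinearMap.proj i).smulRight (fun _ => (1 : R)), ?_⟩, ?_⟩
  · apply LinearMap.ext
    intro x
    funext j
    have hj : j = 0 := Subsingleton.elim _ _
    subst hj
    simp [LinearMap.smulRight_apply, LinearMap.proj_apply, hv]
  · apply le_antisymm
    · rintro _ ⟨x, rfl⟩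
      simp only [LinearMap.smulRight_apply, LinearMap.proj_apply]
      exact Submodule.smul_mem _ _ (Submodule.mem_span_singleton_self v)
    · rw [Submodule.span_le, Set.singleton_subset_iff]
      refine ⟨fun _ => 1, ?_⟩
      simp [LinearMap.smulRight_apply]

lemma splitMap_line_structure [IsLocalRing R] (Y : Submodule R (Fin 2 → R))
    (hY : SplitMap R (Fin 1 → R) Y) :
    ∃ v : Fin 2 → R, Y = Submodule.span R {v} ∧ (IsUnit (v 0) ∨ IsUnit (v 1)) := by
  obtain ⟨f, ⟨g, hgf⟩, hr⟩ := hY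
  set v := f (fun _ => 1) with hvdef
  have hfx : ∀ x : Fin 1 → R, f x = x 0 • v := by
    intro x
    have hx : x = x 0 • (fun _ => (1 : R)) := by
      funext j
      have : j = 0 := Subsingleton.elim _ _
      subst this
      simp
    conv_lhs => rw [hx]
    rw [map_smul]
  refine ⟨v, ?_, ?_⟩
  · rw [← hr]
    apply le_antisymm
    · rintro _ ⟨x, rfl⟩
      rw [hfx]
      exact Submodule.smul_mem _ _ (Submodule.mem_span_singleton_self v)
    · rw [Submodule.span_le, Set.singleton_subset_iff]
      refine ⟨fun _ => 1, ?_⟩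
      rw [hfx]
      simp
  · have hgv : g v 0 = 1 := by
      have h1 := LinearMap.congr_fun hgf (fun _ => (1 : R))
      simp only [comp_apply, id_apply] at h1
      exact congrFun h1 0
    have hvdec : v = v 0 • (Pi.single 0 1 : Fin 2 → R) + v 1 • (Pi.single 1 1 : Fin 2 → R) := by
      funext j
      fin_cases j <;> simp [Pi.single_apply]
    have hkey : v 0 * g ((Pi.single 0 1 : Fin 2 → R)) 0 + v 1 * g ((Pi.single 1 1 : Fin 2 → R)) 0 = 1 := by
      have h2 : g v = v 0 • g (Pi.single 0 1 : Fin 2 → R) + v 1 • g (Pi.single 1 1 : Fin 2 → R) := by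
        conv_lhs => rw [hvdec]
        rw [map_add, map_smul, map_smul]
      have h3 := congrFun h2 0
      simp only [Pi.add_apply, Pi.smul_apply, smul_eq_mul] at h3
      rw [← h3, hgv]
    rcases IsLocalRing.isUnit_or_isUnit_of_add_one hkey with h | h
    · exact Or.inl (isUnit_of_mul_isUnit_left h)
    · exact Or.inr (isUnit_of_mul_isUnit_left h)

end Lines

section SplitMapRank

variable {R : Type*} [CommRing R] {F M : Type*}
  [AddCommGroup F] [Module R F] [AddCommGroup M] [Module R M]

lemma exists_splitMap_map_mkQ [IsLocalRing R] [Module.Projective R M]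
    {E : Type*} [AddCommGroup E] [Module R E] [Module.Finite R E]
    (h : F →ₗ[R] M) (rh : M →ₗ[R] F) (hrh : rh.comp h = LinearMap.id)
    {P : Submodule R M} (hhr : LinearMap.range h = P)
    {X : Submodule R M} (hPX : P ≤ X) (hX : SplitMap R E X) :
    ∃ d : ℕ, SplitMap R (Fin d → R) (X.map P.mkQ) := by
  obtain ⟨f, ⟨g, hgf⟩, hrX⟩ := hX
  obtain ⟨σ, hσπ, hπσ⟩ := mkQ_section h rh hrh hhr
  have hker : ∀ x : M, x ∈ P → P.mkQ x = 0 := by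
    intro x hx
    rw [← P.ker_mkQ] at hx
    exact LinearMap.mem_ker.mp hx
  have hfg : ∀ x, x ∈ X → f (g x) = x := by
    intro x hx
    rw [← hrX] at hx
    obtain ⟨a, rfl⟩ := hx
    have h2 := LinearMap.congr_fun hgf a
    simp only [comp_apply, id_apply] at h2
    rw [h2]
  set Y := X.map P.mkQ with hY
  have hρ0mem : ∀ q : M ⧸ P, P.mkQ (f (g (σ q))) ∈ Y := by
    intro q
    rw [hY]
    exact Submodule.mem_map_of_mem (hrX ▸ LinearMap.mem_range_self f (g (σ q)))
  set ρ : (M ⧸ P) →ₗ[R] Y :=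
    LinearMap.codRestrict Y (P.mkQ.comp (f.comp (g.comp σ))) (fun q => hρ0mem q) with hρdef
  have hρval : ∀ q : M ⧸ P, (ρ q : M ⧸ P) = P.mkQ (f (g (σ q))) := by
    intro q
    simp [hρdef, LinearMap.codRestrict_apply]
  have hρ : ∀ y : Y, ρ (y : M ⧸ P) = y := by
    rintro ⟨y, hy⟩
    apply Subtype.ext
    rw [hρval]
    rw [hY] at hy
    obtain ⟨x, hxX, rfl⟩ := hy
    rw [hσπ]
    have hhx : h (rh x) ∈ X := hPX (hhr ▸ LinearMap.mem_range_self h (rh x))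
    rw [hfg _ (X.sub_mem hxX hhx), map_sub,
      hker (h (rh x)) (hhr ▸ LinearMap.mem_range_self h (rh x)), sub_zero]
  haveI : Module.Projective R Y := by
    refine Module.Projective.of_split (σ.comp Y.subtype) (ρ.comp P.mkQ) ?_
    apply LinearMap.ext
    intro y
    simp only [comp_apply, id_apply, Submodule.coe_subtype]
    rw [hπσ]
    exact hρ y
  haveI : Module.Finite R Y := by
    have hYr : Y = LinearMap.range (P.mkQ.comp f) := by
      rw [hY, ← hrX, LinearMap.range_comp]
    rw [hYr]
    infer_instance
  haveI : Module.FinitePresentation R Y := Module.finitePresentation_of_projective R Y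
  haveI : Module.Free R Y := Module.free_of_flat_of_isLocalRing
  refine ⟨Module.finrank R Y, ?_⟩
  set e : Y ≃ₗ[R] (Fin (Module.finrank R Y) → R) := (Module.finBasis R Y).equivFun with hedef
  refine ⟨Y.subtype.comp e.symm.toLinearMap, ⟨e.toLinearMap.comp ρ, ?_⟩, ?_⟩
  · apply LinearMap.ext
    intro w
    simp only [comp_apply, id_apply, LinearEquiv.coe_coe, Submodule.coe_subtype]
    rw [hρ (e.symm w), LinearEquiv.apply_symm_apply]
  · rw [LinearMap.range_comp, LinearEquiv.range, Submodule.map_top, Submodule.range_subtype]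

end SplitMapRank

section Lines2

variable {R : Type*} [CommRing R] [IsLocalRing R]

lemma line1_props (b : R) :
    SplitMap R (Fin 1 → R) (Submodule.span R {![1, b]}) ∧
      ⊥ < Submodule.span R {![1, b]} ∧ Submodule.span R {![1, b]} < ⊤ := by
  refine ⟨line_splitMap _ 0 (by simp), ?_, ?_⟩
  · rw [bot_lt_iff_ne_bot]
    intro h
    have h0 := Submodule.span_singleton_eq_bot.mp h
    have := congrFun h0 0
    simp at this
  · rw [lt_top_iff_ne_top]
    intro h
    have hmem : Pi.single (1 : Fin 2) (1 : R) ∈ Submodule.span R {![1, b]} := by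
      rw [h]; trivial
    obtain ⟨c, hc⟩ := Submodule.mem_span_singleton.mp hmem
    have h0 := congrFun hc 0
    have h1 := congrFun hc 1
    simp [Pi.single_apply] at h0 h1
    rw [h0, zero_mul] at h1
    exact zero_ne_one h1

lemma line2_props (c : R) (hc : ¬ IsUnit c) :
    SplitMap R (Fin 1 → R) (Submodule.span R {![c, 1]}) ∧
      ⊥ < Submodule.span R {![c, 1]} ∧ Submodule.span R {![c, 1]} < ⊤ := by
  refine ⟨line_splitMap _ 1 (by simp), ?_, ?_⟩
  · rw [bot_lt_iff_ne_bot]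
    intro h
    have h0 := Submodule.span_singleton_eq_bot.mp h
    have := congrFun h0 1
    simp at this
  · rw [lt_top_iff_ne_top]
    intro h
    have hmem : Pi.single (0 : Fin 2) (1 : R) ∈ Submodule.span R {![c, 1]} := by
      rw [h]; trivial
    obtain ⟨d, hd⟩ := Submodule.mem_span_singleton.mp hmem
    have h0 := congrFun hd 0
    simp [Pi.single_apply] at h0
    exact hc (IsUnit.of_mul_eq_one (a := c) d (by rw [mul_comm]; exact h0))

noncomputable def lineB (z : R ⊕ {c : R // ¬ IsUnit c}) :
    {Y : Submodule R (Fin 2 → R) // SplitMap R (Fin 1 → R) Y ∧ ⊥ < Y ∧ Y < ⊤} :=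
  match z with
  | Sum.inl b => ⟨Submodule.span R {![1, b]}, line1_props b⟩
  | Sum.inr c => ⟨Submodule.span R {![c.1, 1]}, line2_props c.1 c.2⟩

lemma lineB_bijective : Function.Bijective (lineB (R := R)) := by
  constructor
  · rintro (b | c) (b' | c') h
    · have hs := congrArg Subtype.val h
      simp only [lineB] at hs
      have hm : (![1, b'] : Fin 2 → R) ∈ Submodule.span R {![1, b]} := by
        rw [hs]; exact Submodule.mem_span_singleton_self _
      obtain ⟨d, hd⟩ := Submodule.mem_span_singleton.mp hm
      have h0 := congrFun hd 0
      have h1 := congrFun hd 1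
      simp at h0 h1
      rw [h0, one_mul] at h1
      exact congrArg Sum.inl h1
    · exfalso
      have hs := congrArg Subtype.val h
      simp only [lineB] at hs
      have hm : (![1, b] : Fin 2 → R) ∈ Submodule.span R {![c'.1, 1]} := by
        rw [← hs]; exact Submodule.mem_span_singleton_self _
      obtain ⟨d, hd⟩ := Submodule.mem_span_singleton.mp hm
      have h0 := congrFun hd 0
      simp at h0
      exact c'.2 (IsUnit.of_mul_eq_one (a := c'.1) d (by rw [mul_comm]; exact h0))
    · exfalso
      have hs := congrArg Subtype.val h
      simp only [lineB] at hs
      have hm : (![1, b'] : Fin 2 → R) ∈ Submodule.span R {![c.1, 1]} := by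
        rw [hs]; exact Submodule.mem_span_singleton_self _
      obtain ⟨d, hd⟩ := Submodule.mem_span_singleton.mp hm
      have h0 := congrFun hd 0
      simp at h0
      exact c.2 (IsUnit.of_mul_eq_one (a := c.1) d (by rw [mul_comm]; exact h0))
    · have hs := congrArg Subtype.val h
      simp only [lineB] at hs
      have hm : (![c'.1, 1] : Fin 2 → R) ∈ Submodule.span R {![c.1, 1]} := by
        rw [hs]; exact Submodule.mem_span_singleton_self _
      obtain ⟨d, hd⟩ := Submodule.mem_span_singleton.mp hm
      have h0 := congrFun hd 0
      have h1 := congrFun hd 1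
      simp at h0 h1
      rw [h1, one_mul] at h0
      exact congrArg Sum.inr (Subtype.ext h0)
  · rintro ⟨Y, hsm, hb, ht⟩
    obtain ⟨v, hYv, hu⟩ := splitMap_line_structure Y hsm
    by_cases h0 : IsUnit (v 0)
    · refine ⟨Sum.inl (↑h0.unit⁻¹ * v 1), Subtype.ext ?_⟩
      simp only [lineB]
      rw [hYv]
      have hinv : v 0 * ↑h0.unit⁻¹ = 1 := by
        have h2 := h0.unit.mul_inv
        rwa [h0.unit_spec] at h2
      have hb1 : v 0 * (↑h0.unit⁻¹ * v 1) = v 1 := by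
        rw [← mul_assoc, hinv, one_mul]
      have hv : v = v 0 • ![1, ↑h0.unit⁻¹ * v 1] := by
        funext j
        fin_cases j
        · simp
        · simp only [Pi.smul_apply, Matrix.cons_val_one, Matrix.head_cons, smul_eq_mul]
          exact hb1.symm
      conv_rhs => rw [hv]
      rw [Submodule.span_singleton_smul_eq h0 _]
    · have h1 : IsUnit (v 1) := hu.resolve_left h0
      have hinv : v 1 * ↑h1.unit⁻¹ = 1 := by
        have h2 := h1.unit.mul_inv
        rwa [h1.unit_spec] at h2
      have hc : ¬ IsUnit (↑h1.unit⁻¹ * v 0) := by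
        intro hcu
        apply h0
        have hv0 : v 0 = ↑h1.unit * (↑h1.unit⁻¹ * v 0) := by
          rw [← mul_assoc, h1.unit.mul_inv, one_mul]
        rw [hv0]
        exact (Units.isUnit h1.unit).mul hcu
      refine ⟨Sum.inr ⟨↑h1.unit⁻¹ * v 0, hc⟩, Subtype.ext ?_⟩
      simp only [lineB]
      rw [hYv]
      have hb1 : v 1 * (↑h1.unit⁻¹ * v 0) = v 0 := by
        rw [← mul_assoc, hinv, one_mul]
      have hv : v = v 1 • ![↑h1.unit⁻¹ * v 0, 1] := by
        funext j
        fin_cases j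
        · simp only [Pi.smul_apply, Matrix.cons_val_zero, smul_eq_mul]
          exact hb1.symm
        · simp
      conv_rhs => rw [hv]
      rw [Submodule.span_singleton_smul_eq h1 _]

end Lines2

lemma count_lines (p s : ℕ) (hp : p.Prime) (hs : 1 ≤ s) :
    Nat.card {Y : Submodule (ZMod (p ^ s)) (Fin 2 → ZMod (p ^ s)) //
        SplitMap (ZMod (p ^ s)) (Fin 1 → ZMod (p ^ s)) Y ∧ ⊥ < Y ∧ Y < ⊤} =
      p ^ (s - 1) * (p + 1) := by
  classical
  haveI : Fact (1 < p ^ s) := ⟨Nat.one_lt_pow (by omega) hp.one_lt⟩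
  haveI : NeZero (p ^ s) := ⟨pow_ne_zero _ hp.pos.ne'⟩
  haveI : IsLocalRing (ZMod (p ^ s)) := zmod_isLocalRing hp hs
  rw [← Nat.card_eq_of_bijective _ (lineB_bijective (R := ZMod (p ^ s)))]
  rw [Nat.card_sum, Nat.card_zmod]
  have hunits : Nat.card {c : ZMod (p ^ s) // IsUnit c} = p ^ (s - 1) * (p - 1) := by
    have he : {c : ZMod (p ^ s) // IsUnit c} ≃ (ZMod (p ^ s))ˣ :=
      { toFun := fun c => c.2.unit
        invFun := fun u => ⟨↑u, u.isUnit⟩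
        left_inv := fun c => Subtype.ext c.2.unit_spec
        right_inv := fun u => Units.ext (IsUnit.unit_spec u.isUnit) }
    rw [Nat.card_congr he, Nat.card_eq_fintype_card, ZMod.card_units_eq_totient,
      Nat.totient_prime_pow hp (by omega : 0 < s)]
  have hsplit := Nat.card_congr (Equiv.sumCompl (fun c : ZMod (p ^ s) => IsUnit c))
  rw [Nat.card_sum, Nat.card_zmod, hunits] at hsplit
  have hps : p ^ s = p ^ (s - 1) * p := by
    conv_lhs => rw [show s = (s - 1) + 1 by omega]
    rw [pow_succ]
  have hq : p ^ (s - 1) * (p - 1) + p ^ (s - 1) = p ^ (s - 1) * p := by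
    rw [← Nat.mul_succ]
    congr 1
    have := hp.one_lt
    omega
  have hC : Nat.card {c : ZMod (p ^ s) // ¬ IsUnit c} = p ^ (s - 1) := by
    have h2 : p ^ (s - 1) * (p - 1) + Nat.card {c : ZMod (p ^ s) // ¬ IsUnit c}
        = p ^ (s - 1) * (p - 1) + p ^ (s - 1) := by
      rw [hsplit, hq, ← hps]
    exact Nat.add_left_cancel h2
  rw [hC, hps, Nat.mul_add, mul_one]

open Matrix in
lemma isSubspace_iff (p s n k : ℕ) (X : Submodule (ZMod (p ^ s)) (Fin n → ZMod (p ^ s))) :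
    IsSubspace p s n k X ↔ SplitMap (ZMod (p ^ s)) (Fin k → ZMod (p ^ s)) X := by
  constructor
  · rintro ⟨M, ⟨B, hMB⟩, rfl⟩
    refine ⟨M.vecMulLinear, ⟨B.vecMulLinear, ?_⟩, ?_⟩
    · apply LinearMap.ext
      intro x
      simp only [LinearMap.comp_apply, Matrix.vecMulLinear_apply, LinearMap.id_apply]
      rw [Matrix.vecMul_vecMul, hMB, Matrix.vecMul_one]
    · rw [range_vecMulLinear]; rfl
  · rintro ⟨f, ⟨g, hgf⟩, hr⟩
    refine ⟨(LinearMap.toMatrix' f)ᵀ, ⟨(LinearMap.toMatrix' g)ᵀ, ?_⟩, ?_⟩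
    · rw [← Matrix.transpose_mul, ← LinearMap.toMatrix'_comp, hgf, LinearMap.toMatrix'_id,
        Matrix.transpose_one]
    · have hf : f = ((LinearMap.toMatrix' f)ᵀ).vecMulLinear := by
        apply LinearMap.ext
        intro x
        rw [Matrix.vecMulLinear_apply, Matrix.vecMul_transpose]
        conv_lhs => rw [← Matrix.toLin'_toMatrix' f]
        rw [Matrix.toLin'_apply]
      rw [← hr]
      conv_lhs => rw [hf]
      rw [range_vecMulLinear]; rfl

theorem stmt_19 (p s m n : ℕ) (hp : p.Prime) (hs : 1 ≤ s) (hm : 2 ≤ m) (hmn : m < n)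
    (P Q : Submodule (ZMod (p ^ s)) (Fin n → ZMod (p ^ s)))
    (hP : IsSubspace p s n (m - 1) P) (hQ : IsSubspace p s n (m + 1) Q) (hPQ : P < Q) :
    Nat.card {X : Submodule (ZMod (p ^ s)) (Fin n → ZMod (p ^ s)) //
        IsSubspace p s n m X ∧ P < X ∧ X < Q} = p ^ (s - 1) * (p + 1) := by
  classical
  haveI : Fact (1 < p ^ s) := ⟨Nat.one_lt_pow (by omega) hp.one_lt⟩
  haveI : NeZero (p ^ s) := ⟨pow_ne_zero _ hp.pos.ne'⟩
  haveI : IsLocalRing (ZMod (p ^ s)) := zmod_isLocalRing hp hs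
  rw [isSubspace_iff] at hP hQ
  obtain ⟨fQ, ⟨gQ, hgQ⟩, hQr⟩ := hQ
  have hQinj : Function.Injective fQ := by
    have hli : Function.LeftInverse gQ fQ := fun x => by
      have := LinearMap.congr_fun hgQ x; simpa using this
    exact hli.injective
  have hPQle : P ≤ Q := le_of_lt hPQ
  have hPle : P ≤ LinearMap.range fQ := hQr ▸ hPQle
  set P' : Submodule (ZMod (p ^ s)) (Fin (m + 1) → ZMod (p ^ s)) := P.comap fQ with hP'def
  have hmapP' : P'.map fQ = P := Submodule.map_comap_eq_self hPle
  have hmaplt := fun (A B : Submodule (ZMod (p ^ s)) (Fin (m + 1) → ZMod (p ^ s))) =>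
    map_lt_map_iff_of_injective hQinj A B
  have hQtop : Submodule.map fQ ⊤ = Q := by rw [Submodule.map_top, hQr]
  -- Step 1 : transfer to the ambient `Fin (m+1) → R`.
  have hto1 : ∀ X' : Submodule (ZMod (p ^ s)) (Fin (m + 1) → ZMod (p ^ s)),
      (SplitMap (ZMod (p ^ s)) (Fin m → ZMod (p ^ s)) X' ∧ P' < X' ∧ X' < ⊤) →
      (IsSubspace p s n m (X'.map fQ) ∧ P < X'.map fQ ∧ X'.map fQ < Q) := by
    rintro X' ⟨h1, h2, h3⟩
    refine ⟨?_, ?_, ?_⟩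
    · rw [isSubspace_iff]
      exact (splitMap_map_iff fQ gQ hgQ X').mpr h1
    · rw [← hmapP']
      exact (hmaplt P' X').mpr h2
    · rw [← hQtop]
      exact (hmaplt X' ⊤).mpr h3
  have hcard1 : Nat.card {X : Submodule (ZMod (p ^ s)) (Fin n → ZMod (p ^ s)) //
        IsSubspace p s n m X ∧ P < X ∧ X < Q} =
      Nat.card {X' : Submodule (ZMod (p ^ s)) (Fin (m + 1) → ZMod (p ^ s)) //
        SplitMap (ZMod (p ^ s)) (Fin m → ZMod (p ^ s)) X' ∧ P' < X' ∧ X' < ⊤} := by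
    refine (Nat.card_eq_of_bijective (fun X' => ⟨X'.1.map fQ, hto1 X'.1 X'.2⟩) ⟨?_, ?_⟩).symm
    · intro A B hAB
      apply Subtype.ext
      have hv := congrArg Subtype.val hAB
      have hinj2 : Function.Injective
          (fun Z : Submodule (ZMod (p ^ s)) (Fin (m + 1) → ZMod (p ^ s)) => Z.map fQ) :=
        fun Y Z hYZ => by
          have hYZ' : Y.map fQ = Z.map fQ := hYZ
          rw [← Submodule.comap_map_eq_of_injective hQinj Y, hYZ',
            Submodule.comap_map_eq_of_injective hQinj Z]
      exact hinj2 hv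
    · rintro ⟨X, hX1, hX2, hX3⟩
      rw [isSubspace_iff] at hX1
      have hXle : X ≤ LinearMap.range fQ := hQr ▸ le_of_lt hX3
      have hmapX : (X.comap fQ).map fQ = X := Submodule.map_comap_eq_self hXle
      refine ⟨⟨X.comap fQ, ?_, ?_, ?_⟩, Subtype.ext hmapX⟩
      · rw [← hmapX] at hX1
        exact (splitMap_map_iff fQ gQ hgQ _).mp hX1
      · rw [← hmapP', ← hmapX] at hX2
        exact (hmaplt _ _).mp hX2
      · rw [← hmapX, ← hQtop] at hX3
        exact (hmaplt _ _).mp hX3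
  rw [hcard1]
  -- Step 2 : pass to the quotient by `P'`.
  have hP'sm : SplitMap (ZMod (p ^ s)) (Fin (m - 1) → ZMod (p ^ s)) P' := by
    rw [← hmapP'] at hP
    exact (splitMap_map_iff fQ gQ hgQ P').mp hP
  obtain ⟨h, ⟨rh, hrh⟩, hhr⟩ := hP'sm
  have hto2 : ∀ Y : Submodule (ZMod (p ^ s)) ((Fin (m + 1) → ZMod (p ^ s)) ⧸ P'),
      (SplitMap (ZMod (p ^ s)) (Fin 1 → ZMod (p ^ s)) Y ∧ ⊥ < Y ∧ Y < ⊤) →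
      (SplitMap (ZMod (p ^ s)) (Fin m → ZMod (p ^ s)) (Y.comap P'.mkQ) ∧
        P' < Y.comap P'.mkQ ∧ Y.comap P'.mkQ < ⊤) := by
    rintro Y ⟨h1, h2, h3⟩
    have hmc : (Y.comap P'.mkQ).map P'.mkQ = Y :=
      Submodule.map_comap_eq_of_surjective P'.mkQ_surjective Y
    refine ⟨?_, ?_, ?_⟩
    · have h4a := splitMap_comap_mkQ h rh hrh hhr h1
      exact SplitMap.congr
        ((finProdLequiv (ZMod (p ^ s)) (m - 1) 1).trans
          (finFunCongr (ZMod (p ^ s)) (by omega : m - 1 + 1 = m))) h4a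
    · have hle : P' ≤ Y.comap P'.mkQ := by
        intro x hx
        rw [Submodule.mem_comap]
        rw [← P'.ker_mkQ] at hx
        rw [LinearMap.mem_ker.mp hx]
        exact Y.zero_mem
      refine lt_of_le_of_ne hle ?_
      intro he
      have hbot : P'.map P'.mkQ = ⊥ := by
        rw [eq_bot_iff]
        rintro _ ⟨x, hx, rfl⟩
        rw [← P'.ker_mkQ] at hx
        simpa using LinearMap.mem_ker.mp hx
      rw [← he, hbot] at hmc
      exact (bot_lt_iff_ne_bot.mp h2) hmc.symm
    · refine lt_top_iff_ne_top.mpr ?_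
      intro he
      rw [he, Submodule.map_top, Submodule.range_mkQ] at hmc
      exact (lt_top_iff_ne_top.mp h3) hmc.symm
  have hcard2 : Nat.card {X' : Submodule (ZMod (p ^ s)) (Fin (m + 1) → ZMod (p ^ s)) //
        SplitMap (ZMod (p ^ s)) (Fin m → ZMod (p ^ s)) X' ∧ P' < X' ∧ X' < ⊤} =
      Nat.card {Y : Submodule (ZMod (p ^ s)) ((Fin (m + 1) → ZMod (p ^ s)) ⧸ P') //
        SplitMap (ZMod (p ^ s)) (Fin 1 → ZMod (p ^ s)) Y ∧ ⊥ < Y ∧ Y < ⊤} := by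
    refine (Nat.card_eq_of_bijective (fun Y => ⟨Y.1.comap P'.mkQ, hto2 Y.1 Y.2⟩) ⟨?_, ?_⟩).symm
    · intro A B hAB
      apply Subtype.ext
      have hv := congrArg Subtype.val hAB
      have hinj2 : Function.Injective
          (fun Z : Submodule (ZMod (p ^ s)) ((Fin (m + 1) → ZMod (p ^ s)) ⧸ P') =>
            Z.comap P'.mkQ) :=
        fun Y Z hYZ => by
          have hYZ' : Y.comap P'.mkQ = Z.comap P'.mkQ := hYZ
          rw [← Submodule.map_comap_eq_of_surjective P'.mkQ_surjective Y, hYZ',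
            Submodule.map_comap_eq_of_surjective P'.mkQ_surjective Z]
      exact hinj2 hv
    · rintro ⟨X', hX'sm, hX'P, hX'top⟩
      have hcm : (X'.map P'.mkQ).comap P'.mkQ = X' := by
        rw [Submodule.comap_map_mkQ, sup_eq_right.mpr (le_of_lt hX'P)]
      obtain ⟨d, hd⟩ := exists_splitMap_map_mkQ h rh hrh hhr (le_of_lt hX'P) hX'sm
      have h4a := splitMap_comap_mkQ h rh hrh hhr hd
      rw [hcm] at h4a
      have hrk : m - 1 + d = m :=
        splitMap_rank_eq (SplitMap.congr (finProdLequiv (ZMod (p ^ s)) (m - 1) d) h4a) hX'sm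
      have hd1 : d = 1 := by omega
      subst hd1
      refine ⟨⟨X'.map P'.mkQ, hd, ?_, ?_⟩, Subtype.ext hcm⟩
      · rw [bot_lt_iff_ne_bot]
        intro hbot
        rw [hbot, Submodule.comap_bot, Submodule.ker_mkQ] at hcm
        rw [hcm] at hX'P
        exact lt_irrefl _ hX'P
      · rw [lt_top_iff_ne_top]
        intro htop
        rw [htop, Submodule.comap_top] at hcm
        rw [← hcm] at hX'top
        exact lt_irrefl _ hX'top
  rw [hcard2]
  -- Step 3 : the quotient is free of rank 2.
  obtain ⟨σ, hσπ, hπσ⟩ := mkQ_section h rh hrh hhr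
  haveI : Module.Projective (ZMod (p ^ s)) ((Fin (m + 1) → ZMod (p ^ s)) ⧸ P') := by
    refine Module.Projective.of_split σ P'.mkQ ?_
    apply LinearMap.ext
    intro q
    simp only [comp_apply, id_apply]
    exact hπσ q
  haveI : Module.FinitePresentation (ZMod (p ^ s)) ((Fin (m + 1) → ZMod (p ^ s)) ⧸ P') :=
    Module.finitePresentation_of_projective _ _
  haveI : Module.Free (ZMod (p ^ s)) ((Fin (m + 1) → ZMod (p ^ s)) ⧸ P') :=
    Module.free_of_flat_of_isLocalRing
  have e0 : ((Fin (m + 1) → ZMod (p ^ s)) ⧸ P') ≃ₗ[ZMod (p ^ s)]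
      (Fin (Module.finrank (ZMod (p ^ s)) ((Fin (m + 1) → ZMod (p ^ s)) ⧸ P')) → ZMod (p ^ s)) :=
    (Module.finBasis _ _).equivFun
  have hsmtop : SplitMap (ZMod (p ^ s))
      (Fin (Module.finrank (ZMod (p ^ s)) ((Fin (m + 1) → ZMod (p ^ s)) ⧸ P')) → ZMod (p ^ s))
      (⊤ : Submodule (ZMod (p ^ s)) ((Fin (m + 1) → ZMod (p ^ s)) ⧸ P')) := by
    refine ⟨e0.symm.toLinearMap, ⟨e0.toLinearMap, ?_⟩, ?_⟩
    · apply LinearMap.ext; intro x; simp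
    · rw [Submodule.eq_top_iff']
      intro q
      exact ⟨e0 q, by simp⟩
  have h4a := splitMap_comap_mkQ h rh hrh hhr hsmtop
  rw [Submodule.comap_top] at h4a
  have hsmM : SplitMap (ZMod (p ^ s)) (Fin (m + 1) → ZMod (p ^ s))
      (⊤ : Submodule (ZMod (p ^ s)) (Fin (m + 1) → ZMod (p ^ s))) :=
    ⟨LinearMap.id, ⟨LinearMap.id, LinearMap.id_comp _⟩, LinearMap.range_id⟩
  have hrk2 : m - 1 + Module.finrank (ZMod (p ^ s)) ((Fin (m + 1) → ZMod (p ^ s)) ⧸ P') = m + 1 :=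
    splitMap_rank_eq (SplitMap.congr (finProdLequiv (ZMod (p ^ s)) (m - 1) _) h4a) hsmM
  have hd2 : Module.finrank (ZMod (p ^ s)) ((Fin (m + 1) → ZMod (p ^ s)) ⧸ P') = 2 := by omega
  have ψ : ((Fin (m + 1) → ZMod (p ^ s)) ⧸ P') ≃ₗ[ZMod (p ^ s)] (Fin 2 → ZMod (p ^ s)) :=
    e0.trans (finFunCongr (ZMod (p ^ s)) hd2)
  -- Step 4 : transfer along ψ and count.
  have hψrj : ψ.symm.toLinearMap.comp ψ.toLinearMap = LinearMap.id := by
    apply LinearMap.ext; intro x; simp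
  have hψinj : Function.Injective ψ.toLinearMap := ψ.injective
  have hψtop : Submodule.map ψ.toLinearMap ⊤ = ⊤ := by
    rw [Submodule.eq_top_iff']
    intro z
    exact ⟨ψ.symm z, trivial, by simp⟩
  have hto3 : ∀ Y : Submodule (ZMod (p ^ s)) ((Fin (m + 1) → ZMod (p ^ s)) ⧸ P'),
      (SplitMap (ZMod (p ^ s)) (Fin 1 → ZMod (p ^ s)) Y ∧ ⊥ < Y ∧ Y < ⊤) →
      (SplitMap (ZMod (p ^ s)) (Fin 1 → ZMod (p ^ s)) (Y.map ψ.toLinearMap) ∧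
        ⊥ < Y.map ψ.toLinearMap ∧ Y.map ψ.toLinearMap < ⊤) := by
    rintro Y ⟨h1, h2, h3⟩
    refine ⟨(splitMap_map_iff ψ.toLinearMap ψ.symm.toLinearMap hψrj Y).mpr h1, ?_, ?_⟩
    · rw [← Submodule.map_bot ψ.toLinearMap]
      exact (map_lt_map_iff_of_injective hψinj _ _).mpr h2
    · rw [← hψtop]
      exact (map_lt_map_iff_of_injective hψinj _ _).mpr h3
  have hcard3 : Nat.card {Y : Submodule (ZMod (p ^ s)) ((Fin (m + 1) → ZMod (p ^ s)) ⧸ P') //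
        SplitMap (ZMod (p ^ s)) (Fin 1 → ZMod (p ^ s)) Y ∧ ⊥ < Y ∧ Y < ⊤} =
      Nat.card {Z : Submodule (ZMod (p ^ s)) (Fin 2 → ZMod (p ^ s)) //
        SplitMap (ZMod (p ^ s)) (Fin 1 → ZMod (p ^ s)) Z ∧ ⊥ < Z ∧ Z < ⊤} := by
    refine Nat.card_eq_of_bijective (fun Y => ⟨Y.1.map ψ.toLinearMap, hto3 Y.1 Y.2⟩) ⟨?_, ?_⟩
    · intro A B hAB
      apply Subtype.ext
      have hv := congrArg Subtype.val hAB
      have hinj2 : Function.Injective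
          (fun Z : Submodule (ZMod (p ^ s)) ((Fin (m + 1) → ZMod (p ^ s)) ⧸ P') =>
            Z.map ψ.toLinearMap) :=
        fun Y Z hYZ => by
          have hYZ' : Y.map ψ.toLinearMap = Z.map ψ.toLinearMap := hYZ
          rw [← Submodule.comap_map_eq_of_injective hψinj Y, hYZ',
            Submodule.comap_map_eq_of_injective hψinj Z]
      exact hinj2 hv
    · rintro ⟨Z, hZsm, hZb, hZt⟩
      have hmc : (Z.comap ψ.toLinearMap).map ψ.toLinearMap = Z :=
        Submodule.map_comap_eq_of_surjective ψ.surjective Z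
      refine ⟨⟨Z.comap ψ.toLinearMap, ?_, ?_, ?_⟩, Subtype.ext hmc⟩
      · rw [← hmc] at hZsm
        exact (splitMap_map_iff ψ.toLinearMap ψ.symm.toLinearMap hψrj _).mp hZsm
      · rw [← hmc, ← Submodule.map_bot ψ.toLinearMap] at hZb
        exact (map_lt_map_iff_of_injective hψinj _ _).mp hZb
      · rw [← hmc, ← hψtop] at hZt
        exact (map_lt_map_iff_of_injective hψinj _ _).mp hZt
  rw [hcard3]
  exact count_lines p s hp hs
end
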